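/- Let α ∈ (1,2), let c₊, c₋ ≥ 0, let η > 0, and let ν be a measure on ℝ with ν({0}) = 0 such that ν((x,∞)) < ∞ and ν((−∞,−x)) < ∞ for every x > 0, and such that x^α ν((x,∞)) → c₊ and x^α ν((−∞,−x)) → c₋ as x → 0⁺. Then lim_{ε → 0⁺} ε^{α−1} ( ∫_{(−η,−ε]} (−ε − x) ν(dx) + ∫_{[ε,η)} (ε − x) ν(dx) ) = (c₋ − c₊)/(α − 1). -/

import Mathlib

open MeasureTheory Filter Topology Set
open scoped ENNReal NNReal

lemma rpow_tendsto_zero {β : ℝ} (hβ : 0 < β) :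
    Tendsto (fun x : ℝ => x ^ β) (𝓝[>] (0:ℝ)) (𝓝 0) := by
  have h := (Real.continuousAt_rpow_const 0 β (Or.inr hβ.le)).tendsto
  rw [Real.zero_rpow (ne_of_gt hβ)] at h
  exact h.mono_left nhdsWithin_le_nhds

lemma key_limit {α η c : ℝ} (hα1 : 1 < α) (hη : 0 < η) (hc0 : 0 ≤ c)
    (G : ℝ → ℝ) (hGanti : AntitoneOn G (Ioi 0))
    (hc : Tendsto (fun t : ℝ => t ^ α * G t) (𝓝[>] 0) (𝓝 c)) :
    Tendsto (fun ε : ℝ => ε ^ (α - 1) * ∫ t in ε..η, G t) (𝓝[>] 0)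
      (𝓝 (c / (α - 1))) := by
  have hα1' : 0 < α - 1 := by linarith
  rw [Metric.tendsto_nhdsWithin_nhds]
  intro e he
  set e' : ℝ := e * (α - 1) / 2 with he'def
  have he' : 0 < e' := by positivity
  obtain ⟨δ₁, hδ₁, hδ₁h⟩ := Metric.tendsto_nhdsWithin_nhds.mp hc e' he'
  set δ : ℝ := min (δ₁ / 2) η with hδdef
  have hδ0 : 0 < δ := lt_min (by linarith) hη
  have hδη : δ ≤ η := min_le_right _ _
  have hδδ₁ : δ < δ₁ := lt_of_le_of_lt (min_le_left _ _) (by linarith)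
  -- tail bound on (0, δ]
  have hGbound : ∀ t ∈ Icc (0:ℝ) δ \ {0}, (c - e') * t ^ (-α) ≤ G t ∧ G t ≤ (c + e') * t ^ (-α) := by
    intro t ht
    obtain ⟨⟨ht0, htδ⟩, ht0'⟩ := ht
    have ht0 : 0 < t := lt_of_le_of_ne ht0 (Ne.symm (by simpa using ht0'))
    have hdist : |t ^ α * G t - c| < e' := by
      have := hδ₁h (mem_Ioi.mpr ht0) (by rw [Real.dist_eq, sub_zero, abs_of_pos ht0]; exact lt_of_le_of_lt htδ hδδ₁)
      simpa [Real.dist_eq] using this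
    rw [abs_lt] at hdist
    have hpow : t ^ (-α) * t ^ α = 1 := by
      rw [← Real.rpow_add ht0]; simp
    have hGt : G t = t ^ (-α) * (t ^ α * G t) := by
      rw [← mul_assoc, hpow, one_mul]
    have hpos : (0:ℝ) < t ^ (-α) := Real.rpow_pos_of_pos ht0 _
    constructor
    · rw [hGt, mul_comm (c - e')]; exact mul_le_mul_of_nonneg_left (by linarith) hpos.le
    · rw [hGt, mul_comm (c + e')]; exact mul_le_mul_of_nonneg_left (by linarith) hpos.le
  set B : ℝ := |∫ t in δ..η, G t| with hBdef
  set K : ℝ := c * δ ^ (1 - α) / (α - 1) with hKdef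
  have hδpow : (0:ℝ) < δ ^ (1 - α) := Real.rpow_pos_of_pos hδ0 _
  have hK0 : 0 ≤ K := by positivity
  have hB0 : 0 ≤ B := abs_nonneg _
  set M : ℝ := e / 2 / (K + B + 1) with hMdef
  have hM0 : 0 < M := by positivity
  set δ₂ : ℝ := M ^ (1 / (α - 1)) with hδ₂def
  have hδ₂0 : 0 < δ₂ := Real.rpow_pos_of_pos hM0 _
  refine ⟨min δ δ₂, lt_min hδ0 hδ₂0, ?_⟩
  intro ε hε hdist
  have hε0 : 0 < ε := hε
  rw [Real.dist_eq, sub_zero, abs_of_pos hε0] at hdist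
  have hεδ : ε < δ := lt_of_lt_of_le hdist (min_le_left _ _)
  have hεδ₂ : ε < δ₂ := lt_of_lt_of_le hdist (min_le_right _ _)
  set P : ℝ := ε ^ (α - 1) with hPdef
  have hP0 : 0 < P := Real.rpow_pos_of_pos hε0 _
  have hPM : P < M := by
    have h1 : P < δ₂ ^ (α - 1) := Real.rpow_lt_rpow hε0.le hεδ₂ hα1'
    have h2 : δ₂ ^ (α - 1) = M := by
      rw [hδ₂def, ← Real.rpow_mul hM0.le, one_div_mul_cancel (ne_of_gt hα1'), Real.rpow_one]
    rw [h2] at h1; exact h1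
  -- integrability
  have hsub1 : uIcc ε δ ⊆ Ioi 0 := by
    rw [uIcc_of_le hεδ.le]; exact fun x hx => lt_of_lt_of_le hε0 hx.1
  have hGI1 : IntervalIntegrable G volume ε δ := AntitoneOn.intervalIntegrable (hGanti.mono hsub1)
  have hGI2 : IntervalIntegrable G volume δ η := by
    refine AntitoneOn.intervalIntegrable (hGanti.mono ?_)
    rw [uIcc_of_le hδη]; exact fun x hx => lt_of_lt_of_le hδ0 hx.1
  have hsplit : ∫ t in ε..η, G t = (∫ t in ε..δ, G t) + ∫ t in δ..η, G t :=
    (intervalIntegral.integral_add_adjacent_intervals hGI1 hGI2).symm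
  have hRI : IntervalIntegrable (fun t : ℝ => t ^ (-α)) volume ε δ := by
    apply ContinuousOn.intervalIntegrable
    intro x hx
    have hx0 : x ≠ 0 := ne_of_gt (hsub1 hx)
    exact (Real.continuousAt_rpow_const x (-α) (Or.inl hx0)).continuousWithinAt
  set R : ℝ := ∫ t in ε..δ, t ^ (-α) with hRdef
  have hRval : R = (δ ^ (-α + 1) - ε ^ (-α + 1)) / (-α + 1) := by
    rw [hRdef]
    exact integral_rpow (Or.inr ⟨by intro h; apply absurd h; intro h2; nlinarith,
      by rw [uIcc_of_le hεδ.le]; exact fun h => absurd h.1 (by linarith)⟩)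
  set I1 : ℝ := ∫ t in ε..δ, G t with hI1def
  set I2 : ℝ := ∫ t in δ..η, G t with hI2def
  have hmem : ∀ x ∈ Icc ε δ, x ∈ Icc (0:ℝ) δ \ {0} :=
    fun x hx => ⟨⟨(hε0.le.trans hx.1), hx.2⟩,
      fun hx0 => absurd (mem_singleton_iff.mp hx0) (ne_of_gt (lt_of_lt_of_le hε0 hx.1))⟩
  have hlow : (c - e') * R ≤ I1 := by
    have h := intervalIntegral.integral_mono_on hεδ.le (hRI.const_mul (c - e')) hGI1
      (fun x hx => ((hGbound x (hmem x hx)).1))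
    rwa [intervalIntegral.integral_const_mul] at h
  have hhigh : I1 ≤ (c + e') * R := by
    have h := intervalIntegral.integral_mono_on hεδ.le hGI1 (hRI.const_mul (c + e'))
      (fun x hx => ((hGbound x (hmem x hx)).2))
    rwa [intervalIntegral.integral_const_mul] at h
  -- key algebraic identities
  set u : ℝ := P * δ ^ (1 - α) with hudef
  have hu0 : 0 ≤ u := by positivity
  have hu1 : u ≤ 1 := by
    have h1 : P ≤ δ ^ (α - 1) := Real.rpow_le_rpow hε0.le hεδ.le hα1'.le
    have h2 : δ ^ (α - 1) * δ ^ (1 - α) = 1 := by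
      rw [← Real.rpow_add hδ0]; norm_num
    calc u ≤ δ ^ (α - 1) * δ ^ (1 - α) := mul_le_mul_of_nonneg_right h1 hδpow.le
      _ = 1 := h2
  have hPε : P * ε ^ (1 - α) = 1 := by
    rw [hPdef, ← Real.rpow_add hε0]
    norm_num
  have hPR : P * R = (1 - u) / (α - 1) := by
    rw [hRval, hudef, show (-α + 1 : ℝ) = -(α - 1) from by ring, div_neg]
    have h1b : ∀ x : ℝ, x ^ (-(α - 1)) = x ^ (1 - α) := fun x => by norm_num
    rw [h1b, h1b]
    linear_combination hPε / (α - 1)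
  have he2 : e' / (α - 1) = e / 2 := by
    have hne : α - 1 ≠ 0 := ne_of_gt hα1'
    rw [he'def]
    field_simp
  -- upper bound for P * I1
  have hupper : P * I1 ≤ c / (α - 1) + e / 2 := by
    have h1 : P * I1 ≤ (c + e') * (P * R) := by
      calc P * I1 ≤ P * ((c + e') * R) := mul_le_mul_of_nonneg_left hhigh hP0.le
        _ = (c + e') * (P * R) := by ring
    have h2 : (c + e') * (P * R) ≤ (c + e') * (1 / (α - 1)) := by
      rw [hPR]
      exact mul_le_mul_of_nonneg_left ((div_le_div_iff_of_pos_right hα1').mpr (by linarith))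
        (by linarith : (0:ℝ) ≤ c + e')
    have h3 : (c + e') * (1 / (α - 1)) = c / (α - 1) + e / 2 := by
      rw [← he2]; ring
    linarith
  -- lower bound for P * I1
  have hPK : P * K = c * u / (α - 1) := by rw [hKdef, hudef]; ring
  have hlower : c / (α - 1) - e / 2 - P * K ≤ P * I1 := by
    have h1 : (c - e') * (P * R) ≤ P * I1 := by
      calc (c - e') * (P * R) = P * ((c - e') * R) := by ring
        _ ≤ P * I1 := mul_le_mul_of_nonneg_left hlow hP0.le
    have h2 : (c - e') * (P * R) = (c - e' - c * u + e' * u) / (α - 1) := by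
      rw [hPR]; ring
    have h3 : (0:ℝ) ≤ e' * u / (α - 1) := by positivity
    have h4 : (c - e' - c * u + e' * u) / (α - 1)
        = c / (α - 1) - e' / (α - 1) - c * u / (α - 1) + e' * u / (α - 1) := by ring
    rw [← hPK, he2] at h4
    linarith [h1, h2, h3, h4]
  -- bound the I2 part
  have hI2b : P * I2 ≤ P * B := mul_le_mul_of_nonneg_left (le_abs_self _) hP0.le
  have hI2a : -(P * B) ≤ P * I2 := by
    have := mul_le_mul_of_nonneg_left (neg_abs_le I2) hP0.le
    rw [mul_neg] at this; exact this
  have hPKB : P * K + P * B < e / 2 := by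
    have h1 : P * (K + B + 1) < M * (K + B + 1) :=
      mul_lt_mul_of_pos_right hPM (by positivity)
    have h2 : M * (K + B + 1) = e / 2 := by
      rw [hMdef]; exact div_mul_cancel₀ _ (by positivity)
    have h3 : P * (K + B + 1) = P * K + P * B + P := by ring
    linarith
  have hdistr : P * (I1 + I2) = P * I1 + P * I2 := by ring
  have hPK0 : (0:ℝ) ≤ P * K := mul_nonneg hP0.le hK0
  rw [hsplit, Real.dist_eq, abs_sub_lt_iff]
  constructor
  · linarith
  · linarith


lemma claimA (ε η : ℝ) (hε : 0 < ε) (hεη : ε < η) (μ : Measure ℝ)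
    (hfin : μ (Ici ε) < ⊤) :
    ∫ x in Ico ε η, (ε - x) ∂μ
      = (η - ε) * (μ (Ici η)).toReal - ∫ t in ε..η, (μ (Ioi t)).toReal := by
  haveI : IsFiniteMeasure (μ.restrict (Ico ε η)) :=
    ⟨by rw [Measure.restrict_apply_univ]
        exact lt_of_le_of_lt (measure_mono Ico_subset_Ici_self) hfin⟩
  -- the layer-cake / Fubini step
  have hS : MeasurableSet {p : ℝ × ℝ | ε < p.2 ∧ p.2 < p.1} :=
    (measurableSet_lt measurable_const measurable_snd).inter
      (measurableSet_lt measurable_snd measurable_fst)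
  have hmeas : AEMeasurable (Function.uncurry fun x t => (Ioo ε x).indicator (1 : ℝ → ℝ≥0∞) t)
      ((μ.restrict (Ico ε η)).prod volume) := by
    have : (Function.uncurry fun x t => (Ioo ε x).indicator (1 : ℝ → ℝ≥0∞) t)
        = ({p : ℝ × ℝ | ε < p.2 ∧ p.2 < p.1}).indicator 1 := by
      funext p
      simp only [Function.uncurry, indicator, mem_Ioo, mem_setOf_eq, Pi.one_apply]
    rw [this]
    exact ((measurable_one).indicator hS).aemeasurable
  have hswap : ∫⁻ x in Ico ε η, ENNReal.ofReal (x - ε) ∂μ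
      = ∫⁻ t in Ioi ε, μ (Ioo t η) ∂volume := by
    calc ∫⁻ x in Ico ε η, ENNReal.ofReal (x - ε) ∂μ
        = ∫⁻ x in Ico ε η, ∫⁻ t, (Ioo ε x).indicator 1 t ∂volume ∂μ := by
          refine lintegral_congr fun x => ?_
          rw [lintegral_indicator_one measurableSet_Ioo, Real.volume_Ioo]
      _ = ∫⁻ t, ∫⁻ x in Ico ε η, (Ioo ε x).indicator 1 t ∂μ ∂volume :=
          lintegral_lintegral_swap hmeas
      _ = ∫⁻ t, (Ioi ε).indicator (fun t => μ (Ioo t η)) t ∂volume := by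
          refine lintegral_congr fun t => ?_
          by_cases ht : ε < t
          case neg =>
            have h1 : ∀ x, (Ioo ε x).indicator (1 : ℝ → ℝ≥0∞) t = 0 := by
              intro x
              apply indicator_of_notMem
              simp only [mem_Ioo, not_and_or]
              exact Or.inl ht
            rw [lintegral_congr h1, lintegral_zero, indicator_of_notMem (by simpa using ht)]
          case pos =>
            have hfun : ∀ x, (Ioo ε x).indicator (1 : ℝ → ℝ≥0∞) t
                = (Ioi t).indicator (1 : ℝ → ℝ≥0∞) x := by
              intro x
              by_cases h : t < x
              · simp [indicator, mem_Ioo, mem_Ioi, ht, h]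
              · simp [indicator, mem_Ioo, mem_Ioi, ht, h]
            rw [lintegral_congr hfun, lintegral_indicator_one measurableSet_Ioi,
              Measure.restrict_apply measurableSet_Ioi, indicator_of_mem (mem_Ioi.mpr ht)]
            congr 1
            ext x
            simp only [mem_inter_iff, mem_Ioi, mem_Ico, mem_Ioo]
            constructor
            · rintro ⟨h1, _, h3⟩; exact ⟨h1, h3⟩
            · rintro ⟨h1, h2⟩; exact ⟨h1, (ht.trans h1).le, h2⟩
      _ = ∫⁻ t in Ioi ε, μ (Ioo t η) ∂volume :=
          (lintegral_indicator measurableSet_Ioi _)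
  have hdisj : Disjoint (Ioo ε η) (Ici η) := by
    rw [disjoint_left]; exact fun x hx1 hx2 => absurd hx1.2 (not_lt.mpr hx2)
  have hzero : ∫⁻ t in Ici η, μ (Ioo t η) ∂volume = 0 := by
    have h : ∀ t ∈ Ici η, μ (Ioo t η) = (0 : ℝ≥0∞) := fun t ht => by
      rw [Ioo_eq_empty (not_lt.mpr ht), measure_empty]
    rw [setLIntegral_congr_fun measurableSet_Ici h, lintegral_zero]
  have hsplit2 : ∫⁻ t in Ioi ε, μ (Ioo t η) ∂volume = ∫⁻ t in Ioo ε η, μ (Ioo t η) ∂volume := by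
    rw [← Ioo_union_Ici_eq_Ioi hεη, lintegral_union measurableSet_Ici hdisj, hzero, add_zero]
  have hvol : volume (Ioo ε η) = ENNReal.ofReal (η - ε) := Real.volume_Ioo
  have hIoiε : μ (Ioi ε) < ⊤ := lt_of_le_of_lt (measure_mono Ioi_subset_Ici_self) hfin
  have hfinB : ∫⁻ t in Ioo ε η, μ (Ioi t) ∂volume < ⊤ := by
    calc ∫⁻ t in Ioo ε η, μ (Ioi t) ∂volume
        ≤ ∫⁻ _ in Ioo ε η, μ (Ioi ε) ∂volume :=
          setLIntegral_mono measurable_const (fun t ht => measure_mono (Ioi_subset_Ioi ht.1.le))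
      _ = μ (Ioi ε) * volume (Ioo ε η) := setLIntegral_const _ _
      _ < ⊤ := ENNReal.mul_lt_top hIoiε (by rw [hvol]; exact ENNReal.ofReal_lt_top)
  have hdecomp : ∀ t ∈ Ioo ε η, μ (Ioi t) = μ (Ioo t η) + μ (Ici η) := by
    intro t ht
    rw [← Ioo_union_Ici_eq_Ioi ht.2, measure_union ?dj measurableSet_Ici]
    case dj => rw [disjoint_left]; exact fun x hx1 hx2 => absurd hx1.2 (not_lt.mpr hx2)
  have hBsum : ∫⁻ t in Ioo ε η, μ (Ioi t) ∂volume
      = (∫⁻ t in Ioo ε η, μ (Ioo t η) ∂volume) + μ (Ici η) * volume (Ioo ε η) := by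
    rw [setLIntegral_congr_fun measurableSet_Ioo hdecomp,
      lintegral_add_right _ measurable_const, setLIntegral_const]
  have hfinA : ∫⁻ t in Ioo ε η, μ (Ioo t η) ∂volume ≠ ⊤ :=
    ne_top_of_le_ne_top hfinB.ne (hBsum ▸ le_self_add)
  have hfinC : μ (Ici η) * volume (Ioo ε η) ≠ ⊤ :=
    ENNReal.mul_ne_top (lt_of_le_of_lt (measure_mono (Ici_subset_Ici.mpr hεη.le)) hfin).ne
      (by rw [hvol]; exact ENNReal.ofReal_ne_top)
  have hb1 : ∫ x in Ico ε η, (ε - x) ∂μ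
      = -(∫⁻ x in Ico ε η, ENNReal.ofReal (x - ε) ∂μ).toReal := by
    have h1 : ∫ x in Ico ε η, (ε - x) ∂μ = -∫ x in Ico ε η, (x - ε) ∂μ := by
      rw [← integral_neg]; simp only [neg_sub]
    rw [h1, integral_eq_lintegral_of_nonneg_ae ?nn ?sm]
    case nn =>
      exact (ae_restrict_iff' measurableSet_Ico).mpr (ae_of_all _ fun x hx => sub_nonneg.mpr hx.1)
    case sm => exact (measurable_id.sub measurable_const).aestronglyMeasurable
  have hmeasG : Measurable fun t : ℝ => μ (Ioi t) :=
    Antitone.measurable (fun s t hst => measure_mono (Ioi_subset_Ioi hst))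
  have hb2 : ∫ t in ε..η, (μ (Ioi t)).toReal
      = (∫⁻ t in Ioo ε η, μ (Ioi t) ∂volume).toReal := by
    rw [intervalIntegral.integral_of_le hεη.le, integral_Ioc_eq_integral_Ioo]
    rw [← integral_toReal hmeasG.aemeasurable.restrict ?fin]
    case fin =>
      exact (ae_restrict_iff' measurableSet_Ioo).mpr
        (ae_of_all _ fun t ht => lt_of_le_of_lt (measure_mono (Ioi_subset_Ioi ht.1.le)) hIoiε)
  rw [hb1, hswap, hsplit2, hb2, hBsum, ENNReal.toReal_add hfinA hfinC, ENNReal.toReal_mul,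
    hvol, ENNReal.toReal_ofReal (by linarith : (0:ℝ) ≤ η - ε)]
  ring


/-- for a Lévy-type measure `ν` on `ℝ` (no atom at `0`, finite tails) with
stable-like tail asymptotics `x^α ν((x,∞)) → c₊` and `x^α ν((−∞,−x)) → c₋` as `x → 0⁺`
(`α ∈ (1,2)`), the drift correction satisfies
`ε^{α−1} (∫_{(−η,−ε]} (−ε−x) ν(dx) + ∫_{[ε,η)} (ε−x) ν(dx)) → (c₋ − c₊)/(α − 1)`. -/
theorem stmt8 (α cp cm η : ℝ) (ν : Measure ℝ)
    (hα1 : 1 < α) (hα2 : α < 2) (hcp : 0 ≤ cp) (hcm : 0 ≤ cm) (hη : 0 < η)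
    (h0 : ν {0} = 0)
    (hfinp : ∀ x : ℝ, 0 < x → ν (Ioi x) < ⊤)
    (hfinm : ∀ x : ℝ, 0 < x → ν (Iio (-x)) < ⊤)
    (hp : Tendsto (fun x : ℝ => x ^ α * (ν (Ioi x)).toReal) (𝓝[>] 0) (𝓝 cp))
    (hm : Tendsto (fun x : ℝ => x ^ α * (ν (Iio (-x))).toReal) (𝓝[>] 0) (𝓝 cm)) :
    Tendsto (fun ε : ℝ =>
        ε ^ (α - 1) *
          ((∫ x in Ioc (-η) (-ε), (-ε - x) ∂ν) + ∫ x in Ico ε η, (ε - x) ∂ν))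
      (𝓝[>] 0) (𝓝 ((cm - cp) / (α - 1))) := by
  have hα1' : 0 < α - 1 := by linarith
  set Gp : ℝ → ℝ := fun t => (ν (Ioi t)).toReal with hGp
  set Gm : ℝ → ℝ := fun t => (ν (Iio (-t))).toReal with hGm
  set Cp : ℝ := (ν (Ici η)).toReal with hCp
  set Cm : ℝ := (ν (Iic (-η))).toReal with hCm
  set νm : Measure ℝ := ν.map Neg.neg with hνm
  have hmapply : ∀ s : Set ℝ, MeasurableSet s → νm s = ν (Neg.neg ⁻¹' s) :=
    fun s hs => Measure.map_apply measurable_neg hs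
  have hνmIoi : ∀ t : ℝ, νm (Ioi t) = ν (Iio (-t)) := by
    intro t
    rw [hmapply _ measurableSet_Ioi]
    congr 1
    ext x
    simp [lt_neg]
  have hνmIci : ∀ t : ℝ, νm (Ici t) = ν (Iic (-t)) := by
    intro t
    rw [hmapply _ measurableSet_Ici]
    congr 1
    ext x
    simp [le_neg]
  have hGpA : AntitoneOn Gp (Ioi 0) := fun s hs t ht hst =>
    ENNReal.toReal_mono (hfinp s hs).ne (measure_mono (Ioi_subset_Ioi hst))
  have hGmA : AntitoneOn Gm (Ioi 0) := fun s hs t ht hst =>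
    ENNReal.toReal_mono (hfinm s hs).ne
      (measure_mono (Iio_subset_Iio (neg_le_neg hst)))
  have Tp := key_limit hα1 hη hcp Gp hGpA hp
  have Tm := key_limit hα1 hη hcm Gm hGmA hm
  have T3 : Tendsto (fun ε : ℝ => ε ^ (α - 1) * ((η - ε) * (Cp - Cm))) (𝓝[>] (0:ℝ))
      (𝓝 0) := by
    have h2 : Tendsto (fun ε : ℝ => (η - ε) * (Cp - Cm)) (𝓝[>] (0:ℝ))
        (𝓝 ((η - 0) * (Cp - Cm))) :=
      (((continuous_const.sub continuous_id).mul continuous_const).tendsto 0).mono_left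
        nhdsWithin_le_nhds
    have := (rpow_tendsto_zero hα1').mul h2
    rwa [zero_mul] at this
  have Tall : Tendsto (fun ε : ℝ =>
      (ε ^ (α - 1) * ∫ t in ε..η, Gm t) - (ε ^ (α - 1) * ∫ t in ε..η, Gp t)
        + ε ^ (α - 1) * ((η - ε) * (Cp - Cm)))
      (𝓝[>] (0:ℝ)) (𝓝 (cm / (α - 1) - cp / (α - 1) + 0)) := (Tm.sub Tp).add T3
  have hval : cm / (α - 1) - cp / (α - 1) + 0 = (cm - cp) / (α - 1) := by ring
  rw [hval] at Tall
  refine Tall.congr' ?_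
  have hev0 : ∀ᶠ ε in 𝓝[>] (0:ℝ), ε ∈ Ioi (0:ℝ) := eventually_mem_nhdsWithin
  have hevη : ∀ᶠ ε in 𝓝[>] (0:ℝ), ε < η :=
    eventually_nhdsWithin_of_eventually_nhds (gt_mem_nhds hη)
  filter_upwards [hev0, hevη] with ε hε0 hεη
  have hε0 : 0 < ε := hε0
  -- positive side via claimA
  have hfinP : ν (Ici ε) < ⊤ :=
    lt_of_le_of_lt (measure_mono fun x hx => lt_of_lt_of_le (by linarith : ε / 2 < ε) hx)
      (hfinp (ε / 2) (by linarith))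
  have hA : ∫ x in Ico ε η, (ε - x) ∂ν = (η - ε) * Cp - ∫ t in ε..η, Gp t :=
    claimA ε η hε0 hεη ν hfinP
  -- negative side via claimA applied to νm
  have hfinM : νm (Ici ε) < ⊤ := by
    rw [hνmIci]
    exact lt_of_le_of_lt
      (measure_mono fun x hx => lt_of_le_of_lt hx (by linarith : -ε < -(ε / 2)))
      (hfinm (ε / 2) (by linarith))
  have hB0 : ∫ x in Ico ε η, (ε - x) ∂νm
      = (η - ε) * Cm - ∫ t in ε..η, Gm t := by
    have := claimA ε η hε0 hεη νm hfinM
    rw [hνmIci] at this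
    simp only [hνmIoi] at this
    exact this
  have hpre : Neg.neg ⁻¹' Ico ε η = Ioc (-η) (-ε) := by
    ext x
    simp only [mem_preimage, mem_Ico, mem_Ioc]
    constructor
    · rintro ⟨h1, h2⟩; constructor <;> linarith
    · rintro ⟨h1, h2⟩; constructor <;> linarith
  have hsm : AEStronglyMeasurable (fun y : ℝ => ε - y) (ν.map Neg.neg) :=
    (by fun_prop : Continuous fun y : ℝ => ε - y).aestronglyMeasurable
  have hmapint := setIntegral_map (μ := ν) (g := Neg.neg) (f := fun y : ℝ => ε - y)
    (s := Ico ε η) measurableSet_Ico hsm measurable_neg.aemeasurable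
  rw [hpre, ← hνm] at hmapint
  have hB : ∫ x in Ioc (-η) (-ε), (-ε - x) ∂ν
      = (∫ t in ε..η, Gm t) - (η - ε) * Cm := by
    have hneg : ∫ x in Ioc (-η) (-ε), (-ε - x) ∂ν
        = -∫ x in Ioc (-η) (-ε), (ε - -x) ∂ν := by
      rw [← integral_neg]
      congr 1
      funext x
      ring
    rw [hneg, ← hmapint, hB0]
    ring
  rw [hA, hB]
  ring
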